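/- The greedy algorithm that assigns K players one by one, each time adding a player to an arm with maximal current marginal gain Δ_m(n_m) (where n_m is the number of players already assigned to arm m), produces a profile maximizing the total utility Σ_m U_m(n_m) over all profiles of nonnegative integers summing to K, provided each U_m satisfies U_m(0)=0 and has non-increasing marginal gains. -/
import Mathlib

lemma delta_anti_aux (V : ℕ → ℝ) (h : ∀ n, V (n + 2) - V (n + 1) ≤ V (n + 1) - V n) :
    ∀ a b, a ≤ b → V (b + 1) - V b ≤ V (a + 1) - V a := by
  intro a b hab
  induction b, hab using Nat.le_induction with
  | base => exact le_refl _
  | succ b hab ih => exact le_trans (h b) ih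

/-- Greedy optimality: starting from the zero profile and performing `K` steps,
each incrementing an arm of maximal current marginal gain, yields a profile
maximizing `Σ_m U_m(n_m)` over all profiles of nonnegative integers summing
to `K`, provided `U_m(0) = 0` and marginal gains are non-increasing. -/
theorem stmt_4 (M K : ℕ) (hM : 0 < M) (hK : 0 < K)
    (U : ℕ → ℕ → ℝ) (hU0 : ∀ m, U m 0 = 0)
    (hconc : ∀ m n, U m (n + 2) - U m (n + 1) ≤ U m (n + 1) - U m n)
    (prof : ℕ → ℕ → ℕ)
    (hinit : ∀ m, prof 0 m = 0)
    (hstep : ∀ t < K, ∃ i < M,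
        (∀ m < M, U m (prof t m + 1) - U m (prof t m) ≤
            U i (prof t i + 1) - U i (prof t i)) ∧
        prof (t + 1) i = prof t i + 1 ∧ (∀ m, m ≠ i → prof (t + 1) m = prof t m)) :
    ∀ n : ℕ → ℕ, (∑ m ∈ Finset.range M, n m = K) →
      ∑ m ∈ Finset.range M, U m (n m) ≤ ∑ m ∈ Finset.range M, U m (prof K m) := by
  -- sum of greedy profile is t
  have hsum : ∀ t, t ≤ K → ∑ m ∈ Finset.range M, prof t m = t := by
    intro t
    induction t with
    | zero => intro _; simp [hinit]
    | succ t ih =>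
      intro h
      obtain ⟨i, hiM, _, hinc, hoth⟩ := hstep t (by omega)
      have hi : i ∈ Finset.range M := Finset.mem_range.2 hiM
      rw [← Finset.add_sum_erase _ _ hi, hinc]
      have : ∑ m ∈ (Finset.range M).erase i, prof (t+1) m
          = ∑ m ∈ (Finset.range M).erase i, prof t m := by
        refine Finset.sum_congr rfl ?_
        intro m hm
        exact hoth m (Finset.ne_of_mem_erase hm)
      rw [this]
      have := ih (by omega)
      rw [← Finset.add_sum_erase _ _ hi] at this
      omega
  have main : ∀ t, t ≤ K → ∀ n : ℕ → ℕ, (∑ m ∈ Finset.range M, n m = t) →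
      ∑ m ∈ Finset.range M, U m (n m) ≤ ∑ m ∈ Finset.range M, U m (prof t m) := by
    intro t
    induction t with
    | zero =>
      intro _ n hn
      apply le_of_eq
      refine Finset.sum_congr rfl ?_
      intro m hm
      rw [Finset.sum_eq_zero_iff.1 hn m hm, hinit]
    | succ t ih =>
      intro h n hn
      obtain ⟨i, hiM, hmax, hinc, hoth⟩ := hstep t (by omega)
      have hi : i ∈ Finset.range M := Finset.mem_range.2 hiM
      -- find an overloaded arm j
      have hex : ∃ j ∈ Finset.range M, prof t j < n j := by
        by_contra hc
        push_neg at hc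
        have := Finset.sum_le_sum hc
        rw [hn, hsum t (by omega)] at this
        omega
      obtain ⟨j, hj, hlt⟩ := hex
      set n' : ℕ → ℕ := Function.update n j (n j - 1) with hn'def
      have hpos : 1 ≤ n j := by omega
      have hn' : ∑ m ∈ Finset.range M, n' m = t := by
        rw [hn'def, Finset.sum_update_of_mem hj]
        rw [← Finset.add_sum_erase _ _ hj, Finset.erase_eq] at hn
        omega
      have key := ih (by omega) n' hn'
      -- rewrite LHS
      have hL : ∑ m ∈ Finset.range M, U m (n m)
          = ∑ m ∈ Finset.range M, U m (n' m) + (U j (n j) - U j (n j - 1)) := by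
        rw [← Finset.add_sum_erase _ (fun m => U m (n m)) hj,
            ← Finset.add_sum_erase _ (fun m => U m (n' m)) hj]
        have : ∑ m ∈ (Finset.range M).erase j, U m (n' m)
            = ∑ m ∈ (Finset.range M).erase j, U m (n m) := by
          refine Finset.sum_congr rfl ?_
          intro m hm
          rw [hn'def, Function.update_of_ne (Finset.ne_of_mem_erase hm)]
        rw [this, hn'def, Function.update_self]
        ring
      -- rewrite RHS
      have hR : ∑ m ∈ Finset.range M, U m (prof (t+1) m)
          = ∑ m ∈ Finset.range M, U m (prof t m)
            + (U i (prof t i + 1) - U i (prof t i)) := by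
        rw [← Finset.add_sum_erase _ (fun m => U m (prof (t+1) m)) hi,
            ← Finset.add_sum_erase _ (fun m => U m (prof t m)) hi]
        have : ∑ m ∈ (Finset.range M).erase i, U m (prof (t+1) m)
            = ∑ m ∈ (Finset.range M).erase i, U m (prof t m) := by
          refine Finset.sum_congr rfl ?_
          intro m hm
          rw [hoth m (Finset.ne_of_mem_erase hm)]
        rw [this, hinc]
        ring
      -- delta bound
      have hd1 : U j (n j) - U j (n j - 1) ≤ U j (prof t j + 1) - U j (prof t j) := by
        have := delta_anti_aux (U j) (hconc j) (prof t j) (n j - 1) (by omega)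
        have heq : n j - 1 + 1 = n j := by omega
        rwa [heq] at this
      have hd2 : U j (prof t j + 1) - U j (prof t j)
          ≤ U i (prof t i + 1) - U i (prof t i) := hmax j (Finset.mem_range.1 hj)
      rw [hL, hR]
      linarith
  exact main K le_rfl
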